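/- Let C₁ and C₂ be the boundaries of two axis-aligned rectilinear simple closed curves meeting transversally at exactly two crossings so that they bound a bigon B whose two arcs, with the orientations induced from C₁ and C₂, do not orient B coherently as a circle. If dots occur exactly at corners turning from vertical to horizontal and X marks at corners from horizontal to vertical along each curve, then B contains at least one dot and at least one X mark on its boundary. -/

import Mathlib

private lemma both_of_three (a b c : ℤ × ℤ) (rest : List (ℤ × ℤ))
    (hax : ∀ v ∈ (a :: b :: c :: rest), (v.1 = 0 ∧ v.2 ≠ 0) ∨ (v.2 = 0 ∧ v.1 ≠ 0))
    (halt : List.Chain' (fun u v => (u.2 = 0 ↔ v.2 ≠ 0)) (a :: b :: c :: rest)) :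
    (∃ i, i + 1 < (a :: b :: c :: rest).length ∧
        ((a :: b :: c :: rest)[i]!).1 = 0 ∧ ((a :: b :: c :: rest)[i+1]!).2 = 0) ∧
    (∃ i, i + 1 < (a :: b :: c :: rest).length ∧
        ((a :: b :: c :: rest)[i]!).2 = 0 ∧ ((a :: b :: c :: rest)[i+1]!).1 = 0) := by
  have ha := hax a (by simp)
  have hb := hax b (by simp)
  have hc := hax c (by simp)
  rw [List.Chain', List.isChain_cons_cons, List.isChain_cons_cons] at halt
  obtain ⟨h1, h2, _⟩ := halt
  have len0 : 0 + 1 < (a :: b :: c :: rest).length := by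
    simp only [List.length_cons]; omega
  have len1 : 1 + 1 < (a :: b :: c :: rest).length := by
    simp only [List.length_cons]; omega
  rcases ha with ⟨ha1, ha2⟩ | ⟨ha1, ha2⟩
  · -- a vertical, so b horizontal, c vertical
    have hb2 : b.2 = 0 := by tauto
    have hc2 : c.2 ≠ 0 := h2.mp hb2
    have hc1 : c.1 = 0 := by tauto
    exact ⟨⟨0, len0, by simpa using ⟨ha1, hb2⟩⟩, ⟨1, len1, by simpa using ⟨hb2, hc1⟩⟩⟩
  · -- a horizontal, so b vertical, c horizontal
    have hb2 : b.2 ≠ 0 := h1.mp ha1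
    have hb1 : b.1 = 0 := by tauto
    have hc2 : c.2 = 0 := by tauto
    exact ⟨⟨1, len1, by simpa using ⟨hb1, hc2⟩⟩, ⟨0, len0, by simpa using ⟨ha1, hb1⟩⟩⟩

/-- A bigon bounded by one arc of a rectilinear curve `C₁` and one arc of a
rectilinear curve `C₂`, both arcs oriented from one crossing to the other
(non-coherent orientations).  Each arc is modeled as its list of edge vectors
in `ℤ × ℤ`: each edge is axis-parallel and nonzero, consecutive edges
alternate horizontal/vertical, and both arcs have the same total displacement
(they join the same two crossings) while being distinct.  Dots occur at
corners turning from vertical to horizontal travel and X marks at corners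
from horizontal to vertical.  Then the boundary of the bigon carries at least
one dot and at least one X mark. -/
theorem bigon_noncoherent_has_dot_and_xmark
    (A B : List (ℤ × ℤ)) (hA : A ≠ []) (hB : B ≠ [])
    (hAax : ∀ v ∈ A, (v.1 = 0 ∧ v.2 ≠ 0) ∨ (v.2 = 0 ∧ v.1 ≠ 0))
    (hBax : ∀ v ∈ B, (v.1 = 0 ∧ v.2 ≠ 0) ∨ (v.2 = 0 ∧ v.1 ≠ 0))
    (hAalt : List.Chain' (fun u v => (u.2 = 0 ↔ v.2 ≠ 0)) A)
    (hBalt : List.Chain' (fun u v => (u.2 = 0 ↔ v.2 ≠ 0)) B)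
    (hsum : A.sum = B.sum)
    (hAB : A ≠ B) :
    ((∃ i, i + 1 < A.length ∧ (A[i]!).1 = 0 ∧ (A[i+1]!).2 = 0) ∨
      (∃ i, i + 1 < B.length ∧ (B[i]!).1 = 0 ∧ (B[i+1]!).2 = 0)) ∧
    ((∃ i, i + 1 < A.length ∧ (A[i]!).2 = 0 ∧ (A[i+1]!).1 = 0) ∨
      (∃ i, i + 1 < B.length ∧ (B[i]!).2 = 0 ∧ (B[i+1]!).1 = 0)) := by
  match A, B with
  | [], _ => exact absurd rfl hA
  | _, [] => exact absurd rfl hB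
  | a1 :: a2 :: a3 :: arest, B =>
      obtain ⟨hd, hx⟩ := both_of_three a1 a2 a3 arest hAax hAalt
      exact ⟨Or.inl hd, Or.inl hx⟩
  | A', b1 :: b2 :: b3 :: brest =>
      obtain ⟨hd, hx⟩ := both_of_three b1 b2 b3 brest hBax hBalt
      exact ⟨Or.inr hd, Or.inr hx⟩
  | [a], [b] =>
      exfalso
      apply hAB
      simp only [List.sum_cons, List.sum_nil, add_zero] at hsum
      rw [hsum]
  | [a], [b1, b2] =>
      exfalso
      have hb1 := hBax b1 (by simp)
      have hb2 := hBax b2 (by simp)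
      have hab := hAax a (by simp)
      rw [List.Chain', List.isChain_cons_cons] at hBalt
      obtain ⟨h1, _⟩ := hBalt
      simp only [List.sum_cons, List.sum_nil, add_zero] at hsum
      have h1' : a.1 = b1.1 + b2.1 := by
        have := congrArg Prod.fst hsum; simpa using this
      have h2' : a.2 = b1.2 + b2.2 := by
        have := congrArg Prod.snd hsum; simpa using this
      rcases hb1 with ⟨p1, p2⟩ | ⟨p1, p2⟩
      · have hb22 : b2.2 = 0 := by tauto
        have hb21 : b2.1 ≠ 0 := by tauto
        rcases hab with ⟨q1, q2⟩ | ⟨q1, q2⟩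
        · exact hb21 (by omega)
        · exact p2 (by omega)
      · have hb22 : b2.2 ≠ 0 := h1.mp p1
        have hb21 : b2.1 = 0 := by tauto
        rcases hab with ⟨q1, q2⟩ | ⟨q1, q2⟩
        · exact p2 (by omega)
        · exact hb22 (by omega)
  | [a1, a2], [b] =>
      exfalso
      have ha1 := hAax a1 (by simp)
      have ha2 := hAax a2 (by simp)
      have hbb := hBax b (by simp)
      rw [List.Chain', List.isChain_cons_cons] at hAalt
      obtain ⟨h1, _⟩ := hAalt
      simp only [List.sum_cons, List.sum_nil, add_zero] at hsum
      have h1' : a1.1 + a2.1 = b.1 := by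
        have := congrArg Prod.fst hsum; simpa using this
      have h2' : a1.2 + a2.2 = b.2 := by
        have := congrArg Prod.snd hsum; simpa using this
      rcases ha1 with ⟨p1, p2⟩ | ⟨p1, p2⟩
      · have ha22 : a2.2 = 0 := by tauto
        have ha21 : a2.1 ≠ 0 := by tauto
        rcases hbb with ⟨q1, q2⟩ | ⟨q1, q2⟩
        · exact ha21 (by omega)
        · exact p2 (by omega)
      · have ha22 : a2.2 ≠ 0 := h1.mp p1
        have ha21 : a2.1 = 0 := by tauto
        rcases hbb with ⟨q1, q2⟩ | ⟨q1, q2⟩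
        · exact p2 (by omega)
        · exact ha22 (by omega)
  | [a1, a2], [b1, b2] =>
      have ha1 := hAax a1 (by simp)
      have ha2 := hAax a2 (by simp)
      have hb1 := hBax b1 (by simp)
      have hb2 := hBax b2 (by simp)
      rw [List.Chain', List.isChain_cons_cons] at hAalt hBalt
      obtain ⟨hA1, _⟩ := hAalt
      obtain ⟨hB1, _⟩ := hBalt
      simp only [List.sum_cons, List.sum_nil, add_zero] at hsum
      have h1' : a1.1 + a2.1 = b1.1 + b2.1 := by
        have := congrArg Prod.fst hsum; simpa using this
      have h2' : a1.2 + a2.2 = b1.2 + b2.2 := by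
        have := congrArg Prod.snd hsum; simpa using this
      rcases ha1 with ⟨p1, p2⟩ | ⟨p1, p2⟩
      · -- a1 vertical, a2 horizontal: A has a dot at 0
        have ha22 : a2.2 = 0 := by tauto
        rcases hb1 with ⟨q1, q2⟩ | ⟨q1, q2⟩
        · -- b1 vertical too: same form ⇒ A = B, contradiction
          exfalso
          have hb22 : b2.2 = 0 := by tauto
          apply hAB
          have e1 : a1 = b1 := Prod.ext (by omega) (by omega)
          have e2 : a2 = b2 := Prod.ext (by omega) (by omega)
          rw [e1, e2]
        · -- b1 horizontal: B has an X at 0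
          have hb22 : b2.2 ≠ 0 := hB1.mp q1
          have hb21 : b2.1 = 0 := by tauto
          exact ⟨Or.inl ⟨0, by simp, by simpa using ⟨p1, ha22⟩⟩,
                 Or.inr ⟨0, by simp, by simpa using ⟨q1, hb21⟩⟩⟩
      · -- a1 horizontal, a2 vertical: A has an X at 0
        have ha22 : a2.2 ≠ 0 := hA1.mp p1
        have ha21 : a2.1 = 0 := by tauto
        rcases hb1 with ⟨q1, q2⟩ | ⟨q1, q2⟩
        · -- b1 vertical: B has a dot at 0
          have hb22 : b2.2 = 0 := by tauto
          exact ⟨Or.inr ⟨0, by simp, by simpa using ⟨q1, hb22⟩⟩,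
                 Or.inl ⟨0, by simp, by simpa using ⟨p1, ha21⟩⟩⟩
        · -- both X form ⇒ A = B, contradiction
          exfalso
          have hb22 : b2.2 ≠ 0 := hB1.mp q1
          have hb21 : b2.1 = 0 := by tauto
          apply hAB
          have e1 : a1 = b1 := Prod.ext (by omega) (by omega)
          have e2 : a2 = b2 := Prod.ext (by omega) (by omega)
          rw [e1, e2]
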